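/- Inexpressibility of consistency: if φ is a formula with |prop(φ)| > 1, then Consis(φ,i) is not equivalent to any formula of the static language L^{∀,X,ℓ,A}_n(Φ): there is no formula χ of the language built from Φ by ¬, ∧, A_i, X_i, likelihood formulas, and quantification such that for every probabilistic awareness structure M and every state t of M, (M,t) ⊨ Consis(φ,i) if and only if (M,t) ⊨ χ. -/

import Mathlib

namespace DynAwareness

/-- Primitive propositions: `Sum.inl n` are the "real" primitive propositions (Φ),
`Sum.inr n` are the "shadow" propositions (Φ'). Φ⁺ is the whole type. -/
abbrev PProp : Type := ℕ ⊕ ℕ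

def realProps : Set PProp := Set.range Sum.inl
def shadowProps : Set PProp := Set.range Sum.inr

/-- A probabilistic awareness structure for agents in `ι` over Φ⁺. -/
structure PAS (ι : Type) where
  S : Type
  finS : Finite S
  pi : S → PProp → Bool
  K : ι → S → S → Prop
  A : ι → S → Set PProp
  PR : ι → S → Set S → ℝ
  L : S → Set PProp
  K_eucl : ∀ i s t u, K i s t → K i s u → K i t u
  K_trans : ∀ i s t u, K i s t → K i t u → K i s u
  K_serial : ∀ i s, ∃ t, K i s t
  PR_nonneg : ∀ i s E, 0 ≤ PR i s E
  PR_empty : ∀ i s, PR i s (∅ : Set S) = 0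
  PR_add : ∀ i s E F, Disjoint E F → PR i s (E ∪ F) = PR i s E + PR i s F
  PR_univ : ∀ i s, PR i s Set.univ = 1
  PR_K : ∀ i s, PR i s {t | K i s t} = 1
  PR_inv : ∀ i s t, K i s t → PR i t = PR i s
  A_inv : ∀ i s t, K i s t → A i t = A i s
  A_sub_L : ∀ i s, A i s ⊆ L s
  L_K : ∀ i s t, K i s t → L t ⊆ A i s ∪ shadowProps

/-- Formulas of the language L^{∀,X,ℓ,A}_n (together with the consistency
formulas `consis φ i`).  A likelihood formula
`a_1 ℓ_i(φ_1) + ⋯ + a_k ℓ_i(φ_k) > b` is `lik i k a φs b`. -/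
inductive Formula (ι : Type) : Type
  | var : ℕ → Formula ι
  | prim : PProp → Formula ι
  | neg : Formula ι → Formula ι
  | conj : Formula ι → Formula ι → Formula ι
  | aw : ι → Formula ι → Formula ι
  | kn : ι → Formula ι → Formula ι
  | lik : ι → (k : ℕ) → (Fin k → ℚ) → (Fin k → Formula ι) → ℚ → Formula ι
  | all : ℕ → Formula ι → Formula ι
  | consis : Formula ι → ι → Formula ι

namespace Formula

variable {ι : Type}

/-- prop(φ): the primitive propositions occurring in φ. -/
def props : Formula ι → Set PProp
  | .var _ => ∅
  | .prim p => {p}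
  | .neg φ => φ.props
  | .conj φ ψ => φ.props ∪ ψ.props
  | .aw _ φ => φ.props
  | .kn _ φ => φ.props
  | .lik _ _ _ φs _ => ⋃ j, (φs j).props
  | .all _ φ => φ.props
  | .consis _ _ => ∅

/-- Simultaneous substitution of formulas for free variables. -/
def subst (σ : ℕ → Formula ι) : Formula ι → Formula ι
  | .var n => σ n
  | .prim p => .prim p
  | .neg φ => .neg (φ.subst σ)
  | .conj φ ψ => .conj (φ.subst σ) (ψ.subst σ)
  | .aw i φ => .aw i (φ.subst σ)
  | .kn i φ => .kn i (φ.subst σ)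
  | .lik i k a φs b => .lik i k a (fun j => (φs j).subst σ) b
  | .all x φ => .all x (φ.subst (Function.update σ x (.var x)))
  | .consis φ i => .consis (φ.subst σ) i

/-- φ[x/χ]: substitute χ for the free occurrences of the variable x in φ. -/
def subst1 (x : ℕ) (χ : Formula ι) (φ : Formula ι) : Formula ι :=
  φ.subst (Function.update Formula.var x χ)

/-- Quantifier-free sentences of the (static) language: no variables, no
quantifiers (and no consistency formulas). -/
def qfSent : Formula ι → Prop
  | .var _ => False
  | .prim _ => True
  | .neg φ => φ.qfSent
  | .conj φ ψ => φ.qfSent ∧ ψ.qfSent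
  | .aw _ φ => φ.qfSent
  | .kn _ φ => φ.qfSent
  | .lik _ _ _ φs _ => ∀ j, (φs j).qfSent
  | .all _ _ => False
  | .consis _ _ => False

/-- Formulas of the static language L^{∀,X,ℓ,A}_n(Φ): built from primitive
propositions in Φ (no consistency formulas). -/
def static : Formula ι → Prop
  | .var _ => True
  | .prim p => p ∈ realProps
  | .neg φ => φ.static
  | .conj φ ψ => φ.static ∧ ψ.static
  | .aw _ φ => φ.static
  | .kn _ φ => φ.static
  | .lik _ _ _ φs _ => ∀ j, (φs j).static
  | .all _ φ => φ.static
  | .consis _ _ => False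

/-- Material implication (abbreviation). -/
def imp (φ ψ : Formula ι) : Formula ι := .neg (.conj φ (.neg ψ))

/-- ∃x φ abbreviates ¬∀x¬φ. -/
def exis (x : ℕ) (φ : Formula ι) : Formula ι := .neg (.all x (.neg φ))

/-- ℓ_i(φ) > b, as a likelihood formula with a single term. -/
def likGt (i : ι) (φ : Formula ι) (b : ℚ) : Formula ι :=
  .lik i 1 (fun _ => 1) (fun _ => φ) b

/-- a₁ℓ_i(φ₁) + a₂ℓ_i(φ₂) > b, as a likelihood formula with two terms. -/
def lik2 (i : ι) (a₁ : ℚ) (φ₁ : Formula ι) (a₂ : ℚ) (φ₂ : Formula ι) (b : ℚ) : Formula ι :=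
  .lik i 2 ![a₁, a₂] ![φ₁, φ₂] b

end Formula

variable {ι : Type}

/-- A state t is consistent with i becoming aware of φ: L(t) contains at least
as many shadow propositions of which i is unaware as there are primitive
propositions of φ of which i is unaware. -/
def consistentWith (M : PAS ι) (φ : Formula ι) (i : ι) (t : M.S) : Prop :=
  ∃ g : (φ.props \ M.A i t : Set PProp) → ((M.L t ∩ shadowProps) \ M.A i t : Set PProp),
    Function.Injective g

/-- cons(M,φ,i): the set of states consistent with i becoming aware of φ. -/
def consSet (M : PAS ι) (φ : Formula ι) (i : ι) : Set M.S :=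
  {t | consistentWith M φ i t}

/-- Truth for quantifier-free sentences (no free variables occur, so no
environment is needed). -/
def TruthQF (M : PAS ι) : Formula ι → M.S → Prop
  | .var _, _ => False
  | .prim p, s => p ∈ M.L s ∧ M.pi s p = true
  | .neg φ, s => φ.props ⊆ M.L s ∧ ¬ TruthQF M φ s
  | .conj φ ψ, s => TruthQF M φ s ∧ TruthQF M ψ s
  | .aw i φ, s => φ.props ⊆ M.A i s
  | .kn i φ, s => φ.props ⊆ M.A i s ∧ ∀ t, M.K i s t → TruthQF M φ t
  | .lik i k a φs b, s =>
      (⋃ j, (φs j).props) ⊆ M.A i s ∧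
      (b : ℝ) < ∑ j : Fin k, ((a j : ℝ) * M.PR i s ({t | TruthQF M (φs j) t} ∩ {t | M.K i s t}))
  | .all _ _, _ => False
  | .consis φ i, s => consistentWith M φ i s

/-- Truth of a formula at a state, relative to an environment σ assigning
(quantifier-free sentences to) the variables. -/
def Truth (M : PAS ι) : (ℕ → Formula ι) → Formula ι → M.S → Prop
  | σ, .var n, s => TruthQF M (σ n) s
  | _, .prim p, s => p ∈ M.L s ∧ M.pi s p = true
  | σ, .neg φ, s => (φ.subst σ).props ⊆ M.L s ∧ ¬ Truth M σ φ s
  | σ, .conj φ ψ, s => Truth M σ φ s ∧ Truth M σ ψ s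
  | σ, .aw i φ, s => (φ.subst σ).props ⊆ M.A i s
  | σ, .kn i φ, s => (φ.subst σ).props ⊆ M.A i s ∧ ∀ t, M.K i s t → Truth M σ φ t
  | σ, .lik i k a φs b, s =>
      (⋃ j, ((φs j).subst σ).props) ⊆ M.A i s ∧
      (b : ℝ) < ∑ j : Fin k, ((a j : ℝ) * M.PR i s ({t | Truth M σ (φs j) t} ∩ {t | M.K i s t}))
  | σ, .all x φ, s =>
      ∀ ψ : Formula ι, ψ.qfSent → ψ.props ⊆ M.L s → Truth M (Function.update σ x ψ) φ s
  | σ, .consis φ i, s => consistentWith M (φ.subst σ) i s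

/-- (M,s) ⊨ φ (sentences do not depend on the environment). -/
def Sat (M : PAS ι) (s : M.S) (φ : Formula ι) : Prop :=
  Truth M Formula.var φ s

/-- [[φ]]_M -/
def intension (M : PAS ι) (φ : Formula ι) : Set M.S := {s | Sat M s φ}

/-- A φ-replacement scheme. -/
def IsRS (φ : Formula ι) (f : PProp → PProp) : Prop :=
  (∀ p, p ∉ φ.props → f p = p) ∧ Set.InjOn f φ.props

/-- A φ-replacement scheme compatible with i becoming aware of φ at s. -/
def CompatRS (M : PAS ι) (φ : Formula ι) (i : ι) (s : M.S) (f : PProp → PProp) : Prop :=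
  IsRS φ f ∧ (∀ p ∈ φ.props ∩ M.A i s, f p = p) ∧
    f '' (φ.props \ M.A i s) ⊆ (M.L s ∩ shadowProps) \ M.A i s

/-- RS(φ) = {id} ∪ ∪_{i,s} RS(φ,i,s). -/
def memRS (M : PAS ι) (φ : Formula ι) (f : PProp → PProp) : Prop :=
  f = id ∨ ∃ (i : ι) (s : M.S), CompatRS M φ i s f

/-- t' (a state of M') is an f-replacement of t (a state of M). -/
def IsFRepl (M M' : PAS ι) (f : PProp → PProp) (t : M.S) (t' : M'.S) : Prop :=
  f '' M'.L t' = M.L t ∧ ∀ p ∈ M'.L t', M'.pi t' p = M.pi t (f p)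

/-- A situation: a model together with a state. -/
structure Situation (ι : Type) where
  M : PAS ι
  s : M.S

/-- A transition rule maps a situation, a formula and an agent to a situation. -/
abbrev TransitionRule (ι : Type) := Situation ι → Formula ι → ι → Situation ι

/-- rep(t') relative to a relation T: all states related by T to t' via some
replacement scheme. -/
def repSet {M M' : PAS ι} (T : M.S → M'.S → (PProp → PProp) → Prop) (t' : M.S) : Set M'.S :=
  {u | ∃ f, T t' u f}

/-- Conditions T1–T4 on the relation T witnessing that (M',s') is an acceptable
update of (M,s) when i becomes aware of φ. -/
def GoodT (M : PAS ι) (s : M.S) (φ : Formula ι) (i : ι) (M' : PAS ι) (s' : M'.S)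
    (T : M.S → M'.S → (PProp → PProp) → Prop) : Prop :=
  -- T ⊆ S × S' × RS(φ)
  (∀ t t' f, T t t' f → memRS M φ f) ∧
  -- T1
  (∀ u : M'.S,
    (∃ t f, T t u f) ∧
    (∀ t₁ f₁ t₂ f₂, T t₁ u f₁ → T t₂ u f₂ → t₁ = t₂ ∧ f₁ = f₂) ∧
    (∀ t f, T t u f → IsFRepl M M' f t u)) ∧
  -- T2
  (T s s' id ∧ M'.A i s' = M.A i s ∪ φ.props ∧ ∀ j, j ≠ i → M'.A j s' = M.A j s) ∧
  -- T3
  (∀ t t' f, T t t' f → (M.K i s t ∨ t = s) → (f ≠ id ∨ (t' = s' ∧ f = id)) →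
    M.PR i s (consSet M φ i) ≠ 0 →
    (({u | M'.K i t' u} =
        {u | ∃ t₀ f₀, (M.K i s t₀ ∧ t₀ ∈ consSet M φ i) ∧ CompatRS M φ i s f₀ ∧ T t₀ u f₀}) ∧
     (∀ t₀, M.K i s t₀ → t₀ ∈ consSet M φ i →
        M'.PR i t' (repSet T t₀ ∩ {u | M'.K i t' u}) =
          M.PR i s {t₀} / M.PR i s (consSet M φ i)) ∧
     (∀ j, j ≠ i → f '' M'.A j t' = M.A j t))) ∧
  -- T4
  (∀ t t' f, T t t' f → ∀ j,
    (j ≠ i ∨ ¬ (M.K i s t ∨ t = s) ∨ (f = id ∧ t' ≠ s')) →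
    (f '' M'.A j t' = M.A j t ∧
     (∀ t₀, M.K j t t₀ → ∃ u, u ≠ s' ∧ T t₀ u f) ∧
     ({u | M'.K j t' u} = {u | ∃ t₀, M.K j t t₀ ∧ T t₀ u f ∧ u ≠ s'}) ∧
     (∀ t₀, M.K j t t₀ →
        M'.PR j t' (repSet T t₀ ∩ {u | M'.K i t' u}) = M.PR j s {t₀})))

/-- An acceptable transition rule. -/
def Acceptable (τ : TransitionRule ι) : Prop :=
  ∀ (M : PAS ι) (s : M.S) (φ : Formula ι) (i : ι), φ.props ⊆ M.L s →
    ((φ.props ⊆ M.A i s → τ ⟨M, s⟩ φ i = ⟨M, s⟩) ∧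
     (¬ φ.props ⊆ M.A i s →
       ∃ T : M.S → (τ ⟨M, s⟩ φ i).M.S → (PProp → PProp) → Prop,
         GoodT M s φ i (τ ⟨M, s⟩ φ i).M (τ ⟨M, s⟩ φ i).s T))
/-! ### Auxiliary development for the inexpressibility theorem -/

noncomputable section Aux
open Classical in

def r0 : PProp := Sum.inr 0

open Classical in
/-- Single-state model with language `Ls` (a set of shadow propositions). -/
def oneState (ι : Type) (Ls : Set PProp) (hLs : Ls ⊆ shadowProps) : PAS ι where
  S := PUnit
  finS := inferInstance
  pi := fun _ _ => false
  K := fun _ _ _ => True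
  A := fun _ _ => ∅
  PR := fun _ _ E => if PUnit.unit ∈ E then 1 else 0
  L := fun _ => Ls
  K_eucl := fun _ _ _ _ _ _ => trivial
  K_trans := fun _ _ _ _ _ _ => trivial
  K_serial := fun _ s => ⟨s, trivial⟩
  PR_nonneg := by intro i s E; split <;> norm_num
  PR_empty := by intro i s; simp
  PR_add := by
    intro i s E F hd
    by_cases hE : PUnit.unit ∈ E <;> by_cases hF : PUnit.unit ∈ F
    · exact absurd hF (Set.disjoint_left.mp hd hE)
    · simp [hE, hF]
    · simp [hE, hF]
    · simp [hE, hF]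
  PR_univ := by intro i s; simp
  PR_K := by intro i s; simp
  PR_inv := fun _ _ _ _ => rfl
  A_inv := fun _ _ _ _ => rfl
  A_sub_L := fun _ _ => Set.empty_subset _
  L_K := fun _ _ _ _ => hLs.trans (Set.subset_union_right)

open Classical in
def M1 (ι : Type) : PAS ι :=
  oneState ι {r0} (by rintro p rfl; exact ⟨0, rfl⟩)

open Classical in
def M2 (ι : Type) : PAS ι := oneState ι shadowProps le_rfl

end Aux
section Aux2
variable {ι : Type}

lemma props_subst_subset {P : Set PProp} :
    ∀ (χ : Formula ι) (σ : ℕ → Formula ι), (∀ n, (σ n).props ⊆ P) →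
      (χ.subst σ).props ⊆ χ.props ∪ P := by
  intro χ
  induction χ with
  | var n => intro σ hσ; simp only [Formula.subst, Formula.props, Set.empty_union]; exact hσ n
  | prim p => intro σ hσ; simp [Formula.subst, Formula.props]
  | neg φ ih => intro σ hσ; simpa [Formula.subst, Formula.props] using ih σ hσ
  | conj φ ψ ih1 ih2 =>
      intro σ hσ
      simp only [Formula.subst, Formula.props, Set.union_subset_iff]
      constructor
      · exact (ih1 σ hσ).trans (by intro x hx; rcases hx with h | h; exacts [Or.inl (Or.inl h), Or.inr h])
      · exact (ih2 σ hσ).trans (by intro x hx; rcases hx with h | h; exacts [Or.inl (Or.inr h), Or.inr h])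
  | aw i φ ih => intro σ hσ; simpa [Formula.subst, Formula.props] using ih σ hσ
  | kn i φ ih => intro σ hσ; simpa [Formula.subst, Formula.props] using ih σ hσ
  | lik i k a φs b ih =>
      intro σ hσ
      simp only [Formula.subst, Formula.props, Set.iUnion_subset_iff]
      intro j
      exact (ih j σ hσ).trans (Set.union_subset_union_left _ (Set.subset_iUnion (fun j => (φs j).props) j))
  | all x φ ih =>
      intro σ hσ
      simp only [Formula.subst, Formula.props]
      refine ih _ ?_
      intro n
      by_cases hn : n = x
      · subst hn; simp [Formula.props]
      · simpa [Function.update_of_ne hn] using hσ n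
  | consis φ i ih => intro σ hσ; simp [Formula.subst, Formula.props]

lemma props_subset_subst :
    ∀ (χ : Formula ι) (σ : ℕ → Formula ι), χ.props ⊆ (χ.subst σ).props := by
  intro χ
  induction χ with
  | var n => intro σ; simp [Formula.props]
  | prim p => intro σ; simp [Formula.subst, Formula.props]
  | neg φ ih => intro σ; simpa [Formula.subst, Formula.props] using ih σ
  | conj φ ψ ih1 ih2 =>
      intro σ; simp only [Formula.subst, Formula.props]
      exact Set.union_subset_union (ih1 σ) (ih2 σ)
  | aw i φ ih => intro σ; simpa [Formula.subst, Formula.props] using ih σ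
  | kn i φ ih => intro σ; simpa [Formula.subst, Formula.props] using ih σ
  | lik i k a φs b ih =>
      intro σ; simp only [Formula.subst, Formula.props, Set.iUnion_subset_iff]
      intro j
      exact (ih j σ).trans (Set.subset_iUnion (fun j => ((φs j).subst σ).props) j)
  | all x φ ih => intro σ; simpa [Formula.subst, Formula.props] using ih _
  | consis φ i ih => intro σ; simp [Formula.subst, Formula.props]

lemma props_subst_empty_iff :
    ∀ (χ : Formula ι) (σ σ' : ℕ → Formula ι),
      (∀ n, ((σ n).props = ∅ ↔ (σ' n).props = ∅)) →
      ((χ.subst σ).props = ∅ ↔ (χ.subst σ').props = ∅) := by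
  intro χ
  induction χ with
  | var n => intro σ σ' h; simpa [Formula.subst] using h n
  | prim p => intro σ σ' h; simp [Formula.subst, Formula.props]
  | neg φ ih => intro σ σ' h; simpa [Formula.subst, Formula.props] using ih σ σ' h
  | conj φ ψ ih1 ih2 =>
      intro σ σ' h
      simp only [Formula.subst, Formula.props, Set.union_empty_iff]
      rw [ih1 σ σ' h, ih2 σ σ' h]
  | aw i φ ih => intro σ σ' h; simpa [Formula.subst, Formula.props] using ih σ σ' h
  | kn i φ ih => intro σ σ' h; simpa [Formula.subst, Formula.props] using ih σ σ' h
  | lik i k a φs b ih =>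
      intro σ σ' h
      simp only [Formula.subst, Formula.props, Set.iUnion_eq_empty]
      exact forall_congr' fun j => ih j σ σ' h
  | all x φ ih =>
      intro σ σ' h
      simp only [Formula.subst, Formula.props]
      refine ih _ _ ?_
      intro n
      by_cases hn : n = x
      · subst hn; simp
      · simp [Function.update_of_ne hn, h n]
  | consis φ i ih => intro σ σ' h; simp [Formula.subst, Formula.props]

lemma static_props : ∀ χ : Formula ι, χ.static → χ.props ⊆ realProps := by
  intro χ
  induction χ with
  | var n => intro _; simp [Formula.props]
  | prim p => intro h; simpa [Formula.props, Formula.static] using h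
  | neg φ ih => exact ih
  | conj φ ψ ih1 ih2 => intro h; exact Set.union_subset (ih1 h.1) (ih2 h.2)
  | aw i φ ih => exact ih
  | kn i φ ih => exact ih
  | lik i k a φs b ih =>
      intro h; exact Set.iUnion_subset fun j => ih j (h j)
  | all x φ ih => exact ih
  | consis φ i ih => intro h; exact absurd h not_false

lemma r0_not_real : r0 ∉ realProps := by rintro ⟨n, h⟩; exact Sum.inl_ne_inr h

lemma real_shadow_disj : ∀ p ∈ realProps, p ∉ shadowProps := by
  rintro p ⟨n, rfl⟩ ⟨m, h⟩; exact Sum.inr_ne_inl h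

end Aux2
section Aux3
variable {ι : Type}

/-- Replace every primitive proposition by `r0`. -/
def rmap : Formula ι → Formula ι
  | .var n => .var n
  | .prim _ => .prim r0
  | .neg φ => .neg (rmap φ)
  | .conj φ ψ => .conj (rmap φ) (rmap ψ)
  | .aw i φ => .aw i (rmap φ)
  | .kn i φ => .kn i (rmap φ)
  | .lik i k a φs b => .lik i k a (fun j => rmap (φs j)) b
  | .all x φ => .all x (rmap φ)
  | .consis φ i => .consis (rmap φ) i

lemma rmap_qf : ∀ ψ : Formula ι, ψ.qfSent → (rmap ψ).qfSent := by
  intro ψ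
  induction ψ with
  | var n => exact id
  | prim p => exact fun _ => trivial
  | neg φ ih => exact ih
  | conj φ ψ ih1 ih2 => exact fun h => ⟨ih1 h.1, ih2 h.2⟩
  | aw i φ ih => exact ih
  | kn i φ ih => exact ih
  | lik i k a φs b ih => exact fun h j => ih j (h j)
  | all x φ ih => exact id
  | consis φ i ih => exact id

lemma rmap_props : ∀ ψ : Formula ι, (rmap ψ).props ⊆ ({r0} : Set PProp) := by
  intro ψ
  induction ψ with
  | var n => simp [rmap, Formula.props]
  | prim p => simp [rmap, Formula.props]
  | neg φ ih => exact ih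
  | conj φ ψ ih1 ih2 => exact Set.union_subset ih1 ih2
  | aw i φ ih => exact ih
  | kn i φ ih => exact ih
  | lik i k a φs b ih => exact Set.iUnion_subset ih
  | all x φ ih => exact ih
  | consis φ i ih => simp [rmap, Formula.props]

lemma rmap_props_empty : ∀ ψ : Formula ι, ((rmap ψ).props = ∅ ↔ ψ.props = ∅) := by
  intro ψ
  induction ψ with
  | var n => simp [rmap, Formula.props]
  | prim p => simp [rmap, Formula.props]
  | neg φ ih => exact ih
  | conj φ ψ ih1 ih2 => simp only [rmap, Formula.props, Set.union_empty_iff]; rw [ih1, ih2]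
  | aw i φ ih => exact ih
  | kn i φ ih => exact ih
  | lik i k a φs b ih =>
      simp only [rmap, Formula.props, Set.iUnion_eq_empty]
      exact forall_congr' ih
  | all x φ ih => exact ih
  | consis φ i ih => simp [rmap, Formula.props]

end Aux3
section Aux4
open Classical
variable {ι : Type}

@[simp] lemma M1_L (s : PUnit) : (M1 ι).L s = {r0} := rfl
@[simp] lemma M2_L (s : PUnit) : (M2 ι).L s = shadowProps := rfl
@[simp] lemma M1_A (j : ι) (s : PUnit) : (M1 ι).A j s = ∅ := rfl
@[simp] lemma M2_A (j : ι) (s : PUnit) : (M2 ι).A j s = ∅ := rfl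
@[simp] lemma M1_pi (s : PUnit) (p : PProp) : (M1 ι).pi s p = false := rfl
@[simp] lemma M2_pi (s : PUnit) (p : PProp) : (M2 ι).pi s p = false := rfl
@[simp] lemma M1_K (j : ι) (s t : PUnit) : (M1 ι).K j s t = True := rfl
@[simp] lemma M2_K (j : ι) (s t : PUnit) : (M2 ι).K j s t = True := rfl
open Classical in
@[simp] lemma M1_PR (j : ι) (s : PUnit) (E : Set PUnit) :
    (M1 ι).PR j s E = if PUnit.unit ∈ E then 1 else 0 := rfl
open Classical in
@[simp] lemma M2_PR (j : ι) (s : PUnit) (E : Set PUnit) :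
    (M2 ι).PR j s E = if PUnit.unit ∈ E then 1 else 0 := rfl

lemma keyA : ∀ ψ : Formula ι, ψ.qfSent → ψ.props ⊆ shadowProps → ∀ s : PUnit,
    (TruthQF (M2 ι) ψ s ↔ TruthQF (M1 ι) (rmap ψ) s) := by
  intro ψ
  induction ψ with
  | var n => intro h; exact absurd h not_false
  | prim p => intro _ hp s; simp [TruthQF, rmap]
  | neg φ ih =>
      intro hqf hp s
      have hp' : φ.props ⊆ shadowProps := hp
      simp only [TruthQF, rmap, M2_L, M1_L]
      rw [ih hqf hp' s]
      simp [hp', rmap_props φ]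
  | conj φ ψ ih1 ih2 =>
      intro hqf hp s
      have hp1 : φ.props ⊆ shadowProps := (Set.union_subset_iff.mp hp).1
      have hp2 : ψ.props ⊆ shadowProps := (Set.union_subset_iff.mp hp).2
      simp only [TruthQF, rmap]
      rw [ih1 hqf.1 hp1 s, ih2 hqf.2 hp2 s]
  | aw j φ ih =>
      intro _ hp s
      simp only [TruthQF, rmap, M2_A, M1_A, Set.subset_empty_iff]
      exact (rmap_props_empty φ).symm
  | kn j φ ih =>
      intro hqf hp s
      simp only [TruthQF, rmap, M2_A, M1_A, M2_K, M1_K, Set.subset_empty_iff]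
      exact and_congr (rmap_props_empty φ).symm
        (forall_congr' fun t => by rw [ih hqf hp t]; exact Iff.rfl)
  | lik j k a φs b ih =>
      intro hqf hp s
      have hpj : ∀ m, (φs m).props ⊆ shadowProps := fun m =>
        (Set.subset_iUnion (fun m => (φs m).props) m).trans hp
      simp only [TruthQF, rmap, M2_A, M1_A, Set.subset_empty_iff, Set.iUnion_eq_empty]
      refine and_congr (forall_congr' fun m => (rmap_props_empty (φs m)).symm) (iff_of_eq ?_)
      congr 1
      refine Finset.sum_congr rfl fun m _ => ?_
      congr 1
      have hset : {t : PUnit | TruthQF (M2 ι) (φs m) t} ∩ {t : PUnit | (M2 ι).K j s t}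
          = {t : PUnit | TruthQF (M1 ι) (rmap (φs m)) t} ∩ {t : PUnit | (M1 ι).K j s t} := by
        ext t
        simp only [Set.mem_inter_iff, Set.mem_setOf_eq, M1_K, M2_K]
        exact and_congr (ih m (hqf m) (hpj m) t) Iff.rfl
      exact congrArg ((M2 ι).PR j s) hset
  | all x φ ih => intro h; exact absurd h not_false
  | consis φ j ih => intro h; exact absurd h not_false

lemma keyB : ∀ ψ : Formula ι, ψ.qfSent → ψ.props ⊆ ({r0} : Set PProp) → ∀ s : PUnit,
    (TruthQF (M1 ι) ψ s ↔ TruthQF (M2 ι) ψ s) := by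
  intro ψ
  induction ψ with
  | var n => intro h; exact absurd h not_false
  | prim p => intro _ hp s; simp [TruthQF]
  | neg φ ih =>
      intro hqf hp s
      have hp' : φ.props ⊆ ({r0} : Set PProp) := hp
      have hsh : φ.props ⊆ shadowProps := hp'.trans (by rintro p rfl; exact ⟨0, rfl⟩)
      simp only [TruthQF, M2_L, M1_L]
      rw [ih hqf hp' s]
      simp [hp', hsh]
  | conj φ ψ ih1 ih2 =>
      intro hqf hp s
      have hp1 : φ.props ⊆ ({r0} : Set PProp) := (Set.union_subset_iff.mp hp).1
      have hp2 : ψ.props ⊆ ({r0} : Set PProp) := (Set.union_subset_iff.mp hp).2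
      simp only [TruthQF]
      rw [ih1 hqf.1 hp1 s, ih2 hqf.2 hp2 s]
  | aw j φ ih => intro _ hp s; simp only [TruthQF, M2_A, M1_A]
  | kn j φ ih =>
      intro hqf hp s
      simp only [TruthQF, M2_A, M1_A, M2_K, M1_K]
      exact and_congr Iff.rfl (forall_congr' fun t => by rw [ih hqf hp t]; exact Iff.rfl)
  | lik j k a φs b ih =>
      intro hqf hp s
      have hpj : ∀ m, (φs m).props ⊆ ({r0} : Set PProp) := fun m =>
        (Set.subset_iUnion (fun m => (φs m).props) m).trans hp
      simp only [TruthQF, M2_A, M1_A]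
      refine and_congr Iff.rfl (iff_of_eq ?_)
      congr 1
      refine Finset.sum_congr rfl fun m _ => ?_
      congr 1
      have hset : {t : PUnit | TruthQF (M1 ι) (φs m) t} ∩ {t : PUnit | (M1 ι).K j s t}
          = {t : PUnit | TruthQF (M2 ι) (φs m) t} ∩ {t : PUnit | (M2 ι).K j s t} := by
        ext t
        simp only [Set.mem_inter_iff, Set.mem_setOf_eq, M1_K, M2_K]
        exact and_congr (ih m (hqf m) (hpj m) t) Iff.rfl
      exact congrArg ((M1 ι).PR j s) hset
  | all x φ ih => intro h; exact absurd h not_false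
  | consis φ j ih => intro h; exact absurd h not_false

end Aux4
section Aux5
open Classical
variable {ι : Type}

lemma shadow_r0 : ({r0} : Set PProp) ⊆ shadowProps := by rintro p rfl; exact ⟨0, rfl⟩

lemma main_transfer : ∀ (χ : Formula ι) (σ σ' : ℕ → Formula ι), χ.static →
    (∀ n, (σ n).props ⊆ ({r0} : Set PProp)) →
    (∀ n, (σ' n).props ⊆ shadowProps) →
    (∀ n, ((σ n).props = ∅ ↔ (σ' n).props = ∅)) →
    (∀ n (s : PUnit), TruthQF (M1 ι) (σ n) s ↔ TruthQF (M2 ι) (σ' n) s) →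
    ∀ s : PUnit, Truth (M1 ι) σ χ s ↔ Truth (M2 ι) σ' χ s := by
  intro χ
  induction χ with
  | var n =>
      intro σ σ' _ _ _ _ hT s
      simp only [Truth]
      exact hT n s
  | prim p => intro σ σ' _ _ _ _ _ s; simp [Truth]
  | neg χ ih =>
      intro σ σ' hst h1 h2 h3 hT s
      have hreal := static_props χ hst
      have c1 : (χ.subst σ).props ⊆ ({r0} : Set PProp) ↔ χ.props = ∅ := by
        constructor
        · intro hsub
          rw [Set.eq_empty_iff_forall_notMem]
          intro p hp
          have : p ∈ ({r0} : Set PProp) := hsub (props_subset_subst χ σ hp)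
          exact real_shadow_disj p (hreal hp) (shadow_r0 this)
        · intro he
          refine (props_subst_subset χ σ h1).trans ?_
          rw [he]; simp
      have c2 : (χ.subst σ').props ⊆ shadowProps ↔ χ.props = ∅ := by
        constructor
        · intro hsub
          rw [Set.eq_empty_iff_forall_notMem]
          intro p hp
          exact real_shadow_disj p (hreal hp) (hsub (props_subset_subst χ σ' hp))
        · intro he
          refine (props_subst_subset χ σ' h2).trans ?_
          rw [he]; simp
      simp only [Truth, M1_L, M2_L]
      exact and_congr (c1.trans c2.symm) (not_congr (ih σ σ' hst h1 h2 h3 hT s))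
  | conj χ ψ ih1 ih2 =>
      intro σ σ' hst h1 h2 h3 hT s
      simp only [Truth]
      exact and_congr (ih1 σ σ' hst.1 h1 h2 h3 hT s) (ih2 σ σ' hst.2 h1 h2 h3 hT s)
  | aw j χ ih =>
      intro σ σ' hst h1 h2 h3 hT s
      simp only [Truth, M1_A, M2_A, Set.subset_empty_iff]
      exact props_subst_empty_iff χ σ σ' h3
  | kn j χ ih =>
      intro σ σ' hst h1 h2 h3 hT s
      simp only [Truth, M1_A, M2_A, M1_K, M2_K, Set.subset_empty_iff]
      exact and_congr (props_subst_empty_iff χ σ σ' h3)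
        (forall_congr' fun t => by rw [ih σ σ' hst h1 h2 h3 hT t]; exact Iff.rfl)
  | lik j k a φs b ih =>
      intro σ σ' hst h1 h2 h3 hT s
      simp only [Truth, M1_A, M2_A, Set.subset_empty_iff, Set.iUnion_eq_empty]
      refine and_congr
        (forall_congr' fun m => props_subst_empty_iff (φs m) σ σ' h3) (iff_of_eq ?_)
      congr 1
      refine Finset.sum_congr rfl fun m _ => ?_
      congr 1
      have hset : {t : PUnit | Truth (M1 ι) σ (φs m) t} ∩ {t : PUnit | (M1 ι).K j s t}
          = {t : PUnit | Truth (M2 ι) σ' (φs m) t} ∩ {t : PUnit | (M2 ι).K j s t} := by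
        ext t
        simp only [Set.mem_inter_iff, Set.mem_setOf_eq, M1_K, M2_K]
        exact and_congr (ih m σ σ' (hst m) h1 h2 h3 hT t) Iff.rfl
      exact congrArg ((M1 ι).PR j s) hset
  | all x χ ih =>
      intro σ σ' hst h1 h2 h3 hT s
      simp only [Truth, M1_L, M2_L]
      constructor
      · intro H ψ' hqf hsub
        have hA := keyA ψ' hqf hsub
        refine (ih (Function.update σ x (rmap ψ')) (Function.update σ' x ψ') hst
          ?_ ?_ ?_ ?_ s).mp (H (rmap ψ') (rmap_qf ψ' hqf) (rmap_props ψ'))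
        · intro n
          rcases eq_or_ne n x with rfl | hn
          · simpa using rmap_props ψ'
          · simpa [Function.update_of_ne hn] using h1 n
        · intro n
          rcases eq_or_ne n x with rfl | hn
          · simpa using hsub
          · simpa [Function.update_of_ne hn] using h2 n
        · intro n
          rcases eq_or_ne n x with rfl | hn
          · simpa using rmap_props_empty ψ'
          · simpa [Function.update_of_ne hn] using h3 n
        · intro n t
          rcases eq_or_ne n x with rfl | hn
          · simpa using (hA t).symm
          · simpa [Function.update_of_ne hn] using hT n t
      · intro H ψ hqf hsub
        have hB := keyB ψ hqf hsub
        refine (ih (Function.update σ x ψ) (Function.update σ' x ψ) hst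
          ?_ ?_ ?_ ?_ s).mpr (H ψ hqf (hsub.trans shadow_r0))
        · intro n
          rcases eq_or_ne n x with rfl | hn
          · simpa using hsub
          · simpa [Function.update_of_ne hn] using h1 n
        · intro n
          rcases eq_or_ne n x with rfl | hn
          · simpa using hsub.trans shadow_r0
          · simpa [Function.update_of_ne hn] using h2 n
        · intro n
          rcases eq_or_ne n x with rfl | hn
          · simp
          · simpa [Function.update_of_ne hn] using h3 n
        · intro n t
          rcases eq_or_ne n x with rfl | hn
          · simpa using hB t
          · simpa [Function.update_of_ne hn] using hT n t
  | consis χ j ih => intro σ σ' hst; exact absurd hst not_false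

/-- Encoding of all primitive propositions into shadow propositions. -/
def enc : PProp → PProp := Sum.elim (fun n => Sum.inr (2 * n)) (fun n => Sum.inr (2 * n + 1))

lemma enc_inj : Function.Injective (enc) := by
  rintro (a | a) (b | b) h <;> simp only [enc, Sum.elim_inl, Sum.elim_inr, Sum.inr.injEq] at h <;>
    first
      | (exact congrArg _ (by omega))
      | omega

lemma enc_shadow (p : PProp) : enc p ∈ shadowProps := by
  rcases p with a | a <;> exact ⟨_, rfl⟩

end Aux5

/-- Inexpressibility of consistency: if |prop(φ)| > 1 then Consis(φ,i) is not
equivalent to any formula of the static language L^{∀,X,ℓ,A}_n(Φ). -/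
theorem consis_inexpressible {ι : Type} (i : ι) (φ : Formula ι)
    (h : ∃ p q : PProp, p ≠ q ∧ p ∈ φ.props ∧ q ∈ φ.props) :
    ¬ ∃ χ : Formula ι, χ.static ∧
        ∀ (M : PAS ι) (t : M.S), t ∈ consSet M φ i ↔ Sat M t χ := by
  rintro ⟨χ, hst, hiff⟩
  obtain ⟨p, q, hpq, hp, hq⟩ := h
  -- the single state of `M2` is consistent with i becoming aware of φ
  have hc2 : PUnit.unit ∈ consSet (M2 ι) φ i := by
    refine ⟨fun x => ⟨enc x.1, ⟨⟨enc_shadow _, enc_shadow _⟩, Set.notMem_empty _⟩⟩, ?_⟩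
    intro x y hxy
    exact Subtype.ext (enc_inj (congrArg Subtype.val hxy))
  -- the single state of `M1` is not
  have hc1 : PUnit.unit ∉ consSet (M1 ι) φ i := by
    rintro ⟨g, hg⟩
    have hxp : p ∈ (φ.props \ (M1 ι).A i PUnit.unit) := ⟨hp, Set.notMem_empty p⟩
    have hxq : q ∈ (φ.props \ (M1 ι).A i PUnit.unit) := ⟨hq, Set.notMem_empty q⟩
    have e1 : (g ⟨p, hxp⟩).1 = r0 := (g ⟨p, hxp⟩).2.1.1
    have e2 : (g ⟨q, hxq⟩).1 = r0 := (g ⟨q, hxq⟩).2.1.1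
    exact hpq (congrArg Subtype.val (hg (Subtype.ext (e1.trans e2.symm))))
  -- but the two states agree on every static formula
  have hsat : Sat (M1 ι) PUnit.unit χ ↔ Sat (M2 ι) PUnit.unit χ := by
    refine main_transfer χ Formula.var Formula.var hst ?_ ?_ ?_ ?_ PUnit.unit
    · intro n; simp [Formula.props]
    · intro n; simp [Formula.props]
    · intro n; simp
    · intro n s; simp [TruthQF]
  exact hc1 ((hiff (M1 ι) PUnit.unit).mpr
    (hsat.mpr ((hiff (M2 ι) PUnit.unit).mp hc2)))

end DynAwareness
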